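/- Let f, g : ℝ^N → ℝ be quasiconvex functions such that f = g almost everywhere with respect to Lebesgue measure, and let m ∈ [−∞, ∞) denote their common essential infimum over ℝ^N. For x ∈ ℝ^N, the point x is a point of approximate continuity of g but not a point of approximate continuity of f if and only if: x is a point of approximate continuity of g, m is finite, g(x) = m, and f(x) < m. -/

import Mathlib

open MeasureTheory Metric Filter

lemma refl_mem {N : ℕ} {S : Set (EuclideanSpace ℝ (Fin N))} (hS : Convex ℝ S)
    (x : EuclideanSpace ℝ (Fin N)) {r : ℝ}
    (h : volume (ball x r) < volume (S ∩ ball x r) + volume (S ∩ ball x r)) : x ∈ S := by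
  set R : EuclideanSpace ℝ (Fin N) → EuclideanSpace ℝ (Fin N) := fun y => (x + x) - y with hRdef
  have hR : MeasurePreserving R volume volume := Measure.measurePreserving_sub_left volume (x + x)
  have hball : R ⁻¹' (ball x r) = ball x r := by
    ext y
    simp only [Set.mem_preimage, mem_ball, hRdef, dist_eq_norm]
    rw [show x + x - y - x = -(y - x) by abel, norm_neg]
  have hnm : NullMeasurableSet (S ∩ ball x r) (volume : Measure (EuclideanSpace ℝ (Fin N))) :=
    (hS.nullMeasurableSet volume).inter measurableSet_ball.nullMeasurableSet
  have hpre : volume (R ⁻¹' (S ∩ ball x r)) = volume (S ∩ ball x r) :=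
    hR.measure_preimage hnm
  have key : (R ⁻¹' (S ∩ ball x r) ∩ (S ∩ ball x r)).Nonempty := by
    rw [Set.nonempty_iff_ne_empty]
    intro hemp
    have hd : AEDisjoint volume (R ⁻¹' (S ∩ ball x r)) (S ∩ ball x r) := by
      rw [AEDisjoint, hemp]; exact measure_empty
    have hnm' : NullMeasurableSet (R ⁻¹' (S ∩ ball x r)) volume :=
      hnm.preimage hR.quasiMeasurePreserving
    have hu : volume (R ⁻¹' (S ∩ ball x r) ∪ S ∩ ball x r)
        = volume (R ⁻¹' (S ∩ ball x r)) + volume (S ∩ ball x r) := measure_union₀ hnm hd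
    have hsub : R ⁻¹' (S ∩ ball x r) ∪ S ∩ ball x r ⊆ ball x r := by
      apply Set.union_subset
      · intro y hy
        have : y ∈ R ⁻¹' (ball x r) := hy.2
        rwa [hball] at this
      · exact Set.inter_subset_right
    have := (measure_mono hsub).trans_lt h
    rw [hu, hpre] at this
    exact lt_irrefl _ this
  obtain ⟨y, hy1, hyS, _⟩ := key
  have hy2 : x + x - y ∈ S := hy1.1
  have hc : (1/2 : ℝ) • (x + x - y) + (1/2 : ℝ) • y ∈ S :=
    hS hy2 hyS (by norm_num) (by norm_num) (by norm_num)
  have : (1/2 : ℝ) • (x + x - y) + (1/2 : ℝ) • y = x := by module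
  rwa [this] at hc

lemma cone_lemma {N : ℕ} {S : Set (EuclideanSpace ℝ (Fin N))} (hS : Convex ℝ S)
    {x : EuclideanSpace ℝ (Fin N)} (hx : x ∈ S) (hpos : 0 < volume S) :
    ∃ γ : ℝ, 0 < γ ∧ γ < 1 ∧ ∀ r : ℝ, 0 < r → r ≤ 1 →
      ENNReal.ofReal γ * volume (ball x r) ≤ volume (S ∩ ball x r) := by
  rcases subsingleton_or_nontrivial (EuclideanSpace ℝ (Fin N)) with hsub | hnt
  · refine ⟨1/2, by norm_num, by norm_num, fun r hr hr1 => ?_⟩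
    have hSeq : S ∩ ball x r = ball x r := by
      apply Set.inter_eq_right.2
      intro y hy
      rwa [Subsingleton.elim y x]
    rw [hSeq]
    calc ENNReal.ofReal (1/2) * volume (ball x r) ≤ 1 * volume (ball x r) := by
          gcongr
          · exact ENNReal.ofReal_le_one.2 (by norm_num)
      _ = volume (ball x r) := one_mul _
  · -- interior nonempty
    have hint : (interior S).Nonempty := by
      by_contra hemp
      rw [Set.not_nonempty_iff_eq_empty] at hemp
      have hspan : affineSpan ℝ S ≠ ⊤ := by
        intro htop
        rw [← hS.interior_nonempty_iff_affineSpan_eq_top] at htop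
        rw [hemp] at htop
        exact htop.ne_empty rfl
      have : volume S = 0 := by
        have hsub2 : S ⊆ (affineSpan ℝ S : Set (EuclideanSpace ℝ (Fin N))) := subset_affineSpan ℝ S
        have h0 : volume ((affineSpan ℝ S : Set (EuclideanSpace ℝ (Fin N)))) = 0 :=
          Measure.addHaar_affineSubspace volume _ hspan
        exact le_antisymm ((measure_mono hsub2).trans h0.le) zero_le
      exact hpos.ne' this
    obtain ⟨z, hz⟩ := hint
    obtain ⟨δ, hδ, hzδ⟩ := Metric.isOpen_iff.1 isOpen_interior z hz
    have hzδS : ball z δ ⊆ S := hzδ.trans interior_subset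
    set D : ℝ := dist z x + δ + 1 with hD
    have hD0 : 0 < D := by positivity
    refine ⟨min ((δ/D)^N) (1/2), lt_min (by positivity) (by norm_num),
      lt_of_le_of_lt (min_le_right _ _) (by norm_num), fun r hr hr1 => ?_⟩
    set t : ℝ := r / D with ht
    have ht0 : 0 < t := div_pos hr hD0
    have ht1 : t ≤ 1 := by
      rw [ht, div_le_one hD0]
      have := dist_nonneg (x := z) (y := x)
      linarith
    have hsubset : ball (x + t • (z - x)) (t*δ) ⊆ S ∩ ball x r := by
      intro w hw
      rw [mem_ball, dist_eq_norm] at hw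
      constructor
      · set u := z + t⁻¹ • (w - (x + t • (z - x))) with hu
        have huz : u ∈ ball z δ := by
          rw [mem_ball, hu, dist_eq_norm]
          have h1 : z + t⁻¹ • (w - (x + t • (z - x))) - z
              = t⁻¹ • (w - (x + t • (z - x))) := by abel
          rw [h1, norm_smul, Real.norm_eq_abs, abs_of_pos (inv_pos.2 ht0)]
          calc t⁻¹ * ‖w - (x + t • (z - x))‖ < t⁻¹ * (t * δ) :=
                mul_lt_mul_of_pos_left hw (inv_pos.2 ht0)
            _ = δ := by field_simp
        have huS : u ∈ S := hzδS huz
        have hcomb : (1 - t) • x + t • u ∈ S :=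
          hS hx huS (by linarith) ht0.le (by ring)
        have heq : (1 - t) • x + t • u = w := by
          rw [hu, smul_add, smul_smul, mul_inv_cancel₀ ht0.ne', one_smul]
          module
        rwa [heq] at hcomb
      · rw [mem_ball, dist_eq_norm]
        have hsplit : w - x = (w - (x + t • (z - x))) + t • (z - x) := by abel
        have hnorm : ‖t • (z - x)‖ = t * ‖z - x‖ := by
          rw [norm_smul, Real.norm_eq_abs, abs_of_pos ht0]
        have hzx : ‖z - x‖ = dist z x := (dist_eq_norm z x).symm
        have h2 : ‖w - x‖ < t * δ + t * dist z x := by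
          calc ‖w - x‖ ≤ ‖w - (x + t • (z - x))‖ + ‖t • (z - x)‖ := by
                rw [hsplit]; exact norm_add_le _ _
            _ < t * δ + t * dist z x := by
                rw [hnorm, hzx]
                exact add_lt_add_of_lt_of_le hw le_rfl
        have h3 : t * δ + t * dist z x ≤ r := by
          have hDr : t * D = r := by rw [ht, div_mul_cancel₀ _ hD0.ne']
          nlinarith
        linarith
    have hball1 : volume (ball (x + t • (z - x)) (t*δ))
        = ENNReal.ofReal ((t*δ)^N) * volume (ball (0 : EuclideanSpace ℝ (Fin N)) 1) := by
      rw [Measure.addHaar_ball _ _ (by positivity : (0:ℝ) ≤ t*δ), finrank_euclideanSpace,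
        Fintype.card_fin]
    have hball2 : volume (ball x r)
        = ENNReal.ofReal (r^N) * volume (ball (0 : EuclideanSpace ℝ (Fin N)) 1) := by
      rw [Measure.addHaar_ball _ _ hr.le, finrank_euclideanSpace, Fintype.card_fin]
    calc ENNReal.ofReal (min ((δ/D)^N) (1/2)) * volume (ball x r)
        ≤ ENNReal.ofReal ((δ/D)^N) * volume (ball x r) := by
          gcongr
          exact min_le_left _ _
      _ = volume (ball (x + t • (z - x)) (t*δ)) := by
          rw [hball1, hball2, ← mul_assoc, ← ENNReal.ofReal_mul (by positivity)]
          congr 2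
          rw [← mul_pow, ht]
          congr 1
          field_simp
      _ ≤ volume (S ∩ ball x r) := measure_mono hsubset

lemma band_nullMeasurable {N : ℕ} {g : EuclideanSpace ℝ (Fin N) → ℝ}
    (hg : ∀ α : ℝ, Convex ℝ {x | g x < α}) (c ε : ℝ) :
    NullMeasurableSet {y | |g y - c| < ε} (volume : Measure (EuclideanSpace ℝ (Fin N))) := by
  have h1 : {y | |g y - c| < ε} = {y | g y < c + ε} ∩ {y | g y ≤ c - ε}ᶜ := by
    ext y
    simp only [Set.mem_setOf_eq, Set.mem_inter_iff, Set.mem_compl_iff, abs_lt, not_le]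
    constructor
    · rintro ⟨h1, h2⟩; constructor <;> linarith
    · rintro ⟨h1, h2⟩; constructor <;> linarith
  have h2 : {y | g y ≤ c - ε} = ⋂ n : ℕ, {y | g y < c - ε + 1/(n+1)} := by
    ext y
    simp only [Set.mem_iInter, Set.mem_setOf_eq]
    constructor
    · intro h n
      have hn : (0:ℝ) < 1/((n:ℝ)+1) := by positivity
      linarith
    · intro h
      by_contra hlt
      push_neg at hlt
      obtain ⟨n, hn⟩ := exists_nat_one_div_lt (by linarith : (0:ℝ) < g y - (c - ε))
      have := h n
      linarith
  rw [h1]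
  refine ((hg _).nullMeasurableSet volume).inter (NullMeasurableSet.compl ?_)
  rw [h2]
  exact NullMeasurableSet.iInter fun n => (hg _).nullMeasurableSet volume

/-- `f` is approximately continuous at `x` if for every `ε > 0` the set
`{y | |f y - f x| < ε}` has Lebesgue density `1` at `x`. -/
def ApproxContinuousAt {N : ℕ} (f : EuclideanSpace ℝ (Fin N) → ℝ)
    (x : EuclideanSpace ℝ (Fin N)) : Prop :=
  ∀ ε : ℝ, 0 < ε →
    Tendsto (fun r : ℝ => volume ({y | |f y - f x| < ε} ∩ ball x r) / volume (ball x r))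
      (nhdsWithin 0 (Set.Ioi 0)) (nhds 1)

theorem stmt_12 {N : ℕ} (f g : EuclideanSpace ℝ (Fin N) → ℝ)
    (hf : ∀ α : ℝ, Convex ℝ {x | f x < α}) (hg : ∀ α : ℝ, Convex ℝ {x | g x < α})
    (hfg : f =ᵐ[volume] g) (m : EReal)
    (hm : m = essInf (fun x => (f x : EReal)) volume) (hmtop : m ≠ ⊤)
    (x : EuclideanSpace ℝ (Fin N)) :
    (ApproxContinuousAt g x ∧ ¬ ApproxContinuousAt f x) ↔
      (ApproxContinuousAt g x ∧ m ≠ ⊥ ∧ (g x : EReal) = m ∧ (f x : EReal) < m) := by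
  have hv0 : ∀ r : ℝ, 0 < r → (volume (ball x r) : ENNReal) ≠ 0 :=
    fun r hr => (measure_ball_pos volume x hr).ne'
  have hvt : ∀ r : ℝ, volume (ball x r) ≠ ⊤ := fun r => measure_ball_lt_top.ne
  have h22 : ∀ a : ENNReal, a = 2⁻¹ * a + 2⁻¹ * a := fun a => by
    rw [← two_mul, ← mul_assoc, ENNReal.mul_inv_cancel (by norm_num) (by norm_num), one_mul]
  have hsub_ae : ∀ α : ℝ,
      {y | f y < α} =ᵐ[(volume : Measure (EuclideanSpace ℝ (Fin N)))] {y | g y < α} := fun α =>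
    Filter.eventuallyEq_set.2 (hfg.mono fun y hy => by
      rw [Set.mem_setOf_eq, Set.mem_setOf_eq, hy])
  have hband_ae : ∀ c ε : ℝ,
      {y | |f y - c| < ε} =ᵐ[(volume : Measure (EuclideanSpace ℝ (Fin N)))]
        {y | |g y - c| < ε} := fun c ε =>
    Filter.eventuallyEq_set.2 (hfg.mono fun y hy => by
      rw [Set.mem_setOf_eq, Set.mem_setOf_eq, hy])
  have hvol : ∀ c ε r : ℝ, volume ({y | |f y - c| < ε} ∩ ball x r)
      = volume ({y | |g y - c| < ε} ∩ ball x r) :=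
    fun c ε r => measure_congr ((hband_ae c ε).inter (Filter.EventuallyEq.refl _ _))
  have hACf : ApproxContinuousAt f x ↔ (∀ ε : ℝ, 0 < ε →
      Tendsto (fun r : ℝ => volume ({y | |g y - f x| < ε} ∩ ball x r) / volume (ball x r))
        (nhdsWithin 0 (Set.Ioi 0)) (nhds 1)) := by
    unfold ApproxContinuousAt
    refine forall_congr' fun ε => imp_congr_right fun hε => ?_
    rw [show (fun r : ℝ => volume ({y | |f y - f x| < ε} ∩ ball x r) / volume (ball x r))
        = fun r : ℝ => volume ({y | |g y - f x| < ε} ∩ ball x r) / volume (ball x r) from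
      funext fun r => by rw [hvol]]
  have huniq : ∀ c₁ c₂ : ℝ,
      (∀ ε : ℝ, 0 < ε →
        Tendsto (fun r : ℝ => volume ({y | |g y - c₁| < ε} ∩ ball x r) / volume (ball x r))
          (nhdsWithin 0 (Set.Ioi 0)) (nhds 1)) →
      (∀ ε : ℝ, 0 < ε →
        Tendsto (fun r : ℝ => volume ({y | |g y - c₂| < ε} ∩ ball x r) / volume (ball x r))
          (nhdsWithin 0 (Set.Ioi 0)) (nhds 1)) → c₁ = c₂ := by
    intro c₁ c₂ h1 h2
    by_contra hne
    have habs : 0 < |c₁ - c₂| := abs_pos.2 (sub_ne_zero.2 hne)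
    set ε := |c₁ - c₂| / 2 with hε
    have hε0 : 0 < ε := by positivity
    have hd : ∀ y : EuclideanSpace ℝ (Fin N),
        y ∈ {y | |g y - c₁| < ε} → y ∉ {y | |g y - c₂| < ε} := by
      intro y hy1 hy2
      rw [Set.mem_setOf_eq] at hy1 hy2
      have h3 := abs_sub_le c₁ (g y) c₂
      rw [abs_sub_comm c₁ (g y)] at h3
      rw [hε] at hy1 hy2
      linarith
    obtain ⟨r, ⟨hr1, hr2⟩, hrpos⟩ :=
      ((((h1 ε hε0).eventually (lt_mem_nhds (by norm_num : (2⁻¹ : ENNReal) < 1))).and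
        ((h2 ε hε0).eventually (lt_mem_nhds (by norm_num : (2⁻¹ : ENNReal) < 1)))).and
        self_mem_nhdsWithin).exists
    have hrpos' : (0:ℝ) < r := hrpos
    have hm1 : 2⁻¹ * volume (ball x r) < volume ({y | |g y - c₁| < ε} ∩ ball x r) :=
      (ENNReal.lt_div_iff_mul_lt (Or.inl (hv0 r hrpos')) (Or.inl (hvt r))).1 hr1
    have hm2 : 2⁻¹ * volume (ball x r) < volume ({y | |g y - c₂| < ε} ∩ ball x r) :=
      (ENNReal.lt_div_iff_mul_lt (Or.inl (hv0 r hrpos')) (Or.inl (hvt r))).1 hr2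
    have hdisj : Disjoint ({y | |g y - c₁| < ε} ∩ ball x r)
        ({y | |g y - c₂| < ε} ∩ ball x r) := by
      rw [Set.disjoint_left]
      rintro y ⟨hy1, _⟩ ⟨hy2, _⟩
      exact hd y hy1 hy2
    have hun : volume (({y | |g y - c₁| < ε} ∩ ball x r) ∪ ({y | |g y - c₂| < ε} ∩ ball x r))
        = volume ({y | |g y - c₁| < ε} ∩ ball x r)
          + volume ({y | |g y - c₂| < ε} ∩ ball x r) :=
      measure_union₀ ((band_nullMeasurable hg c₂ ε).inter measurableSet_ball.nullMeasurableSet)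
        hdisj.aedisjoint
    have hle : volume (({y | |g y - c₁| < ε} ∩ ball x r) ∪ ({y | |g y - c₂| < ε} ∩ ball x r))
        ≤ volume (ball x r) :=
      measure_mono (Set.union_subset Set.inter_subset_right Set.inter_subset_right)
    have hcon : volume (ball x r) < volume (ball x r) := by
      calc volume (ball x r) = 2⁻¹ * volume (ball x r) + 2⁻¹ * volume (ball x r) := h22 _
        _ < volume ({y | |g y - c₁| < ε} ∩ ball x r)
            + volume ({y | |g y - c₂| < ε} ∩ ball x r) := ENNReal.add_lt_add hm1 hm2
        _ = volume (({y | |g y - c₁| < ε} ∩ ball x r)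
            ∪ ({y | |g y - c₂| < ε} ∩ ball x r)) := hun.symm
        _ ≤ volume (ball x r) := hle
    exact lt_irrefl _ hcon
  constructor
  · rintro ⟨hgx, hnf⟩
    have hDgg : ∀ ε : ℝ, 0 < ε →
        Tendsto (fun r : ℝ => volume ({y | |g y - g x| < ε} ∩ ball x r) / volume (ball x r))
          (nhdsWithin 0 (Set.Ioi 0)) (nhds 1) := hgx
    have hne : f x ≠ g x := by
      intro h
      exact hnf (hACf.2 (h ▸ hDgg))
    -- Step D : f x ≤ g x
    have hfxle : f x ≤ g x := by
      by_contra hlt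
      push_neg at hlt
      set α := (g x + f x)/2 with hα
      have hε0 : (0:ℝ) < α - g x := by rw [hα]; linarith
      have hTsub : {y | |g y - g x| < α - g x} ⊆ {y | g y < α} := by
        intro y hy
        rw [Set.mem_setOf_eq, abs_lt] at hy
        rw [Set.mem_setOf_eq]
        linarith [hy.2]
      obtain ⟨r, hr, hrpos⟩ :=
        (((hDgg _ hε0).eventually (lt_mem_nhds (by norm_num : (2⁻¹ : ENNReal) < 1))).and
          self_mem_nhdsWithin).exists
      have hrpos' : (0:ℝ) < r := hrpos
      have hm1 : 2⁻¹ * volume (ball x r)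
          < volume ({y | |g y - g x| < α - g x} ∩ ball x r) :=
        (ENNReal.lt_div_iff_mul_lt (Or.inl (hv0 r hrpos')) (Or.inl (hvt r))).1 hr
      have hm2 : 2⁻¹ * volume (ball x r) < volume ({y | f y < α} ∩ ball x r) := by
        refine hm1.trans_le ?_
        rw [show volume ({y | f y < α} ∩ ball x r) = volume ({y | g y < α} ∩ ball x r) from
          measure_congr ((hsub_ae α).inter (Filter.EventuallyEq.refl _ _))]
        exact measure_mono (Set.inter_subset_inter_left _ hTsub)
      have hxmem : x ∈ {y | f y < α} := by
        apply refl_mem (hf α) x (r := r)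
        calc volume (ball x r) = 2⁻¹ * volume (ball x r) + 2⁻¹ * volume (ball x r) := h22 _
          _ < volume ({y | f y < α} ∩ ball x r) + volume ({y | f y < α} ∩ ball x r) :=
            ENNReal.add_lt_add hm2 hm2
      have hfxα : f x < α := hxmem
      rw [hα] at hfxα
      linarith
    have hfxlt : f x < g x := lt_of_le_of_ne hfxle hne
    -- Step F : m ≤ g x
    have hmle : m ≤ (g x : EReal) := by
      by_contra h
      push_neg at h
      obtain ⟨β, hβ1, hβ2⟩ := exists_between h
      have hβt : β ≠ ⊤ := (hβ2.trans hmtop.lt_top).ne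
      have hβb : β ≠ ⊥ := ne_bot_of_gt hβ1
      set b := β.toReal with hbdef
      have hb : (b : EReal) = β := EReal.coe_toReal hβt hβb
      have hgb : g x < b := by
        have h' : ((g x : ℝ) : EReal) < (b : EReal) := by rw [hb]; exact hβ1
        exact_mod_cast h'
      have hmb : (b : EReal) < m := by rw [hb]; exact hβ2
      have hε0 : (0:ℝ) < b - g x := by linarith
      have hTsub : {y | |g y - g x| < b - g x} ⊆ {y | g y < b} := by
        intro y hy
        rw [Set.mem_setOf_eq, abs_lt] at hy
        rw [Set.mem_setOf_eq]
        linarith [hy.2]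
      have hae : ∀ᵐ y ∂(volume : Measure (EuclideanSpace ℝ (Fin N))), m ≤ (f y : EReal) := by
        rw [hm]; exact ae_essInf_le
      have hfnull : volume {y | f y < b} = 0 := by
        refine measure_mono_null ?_ (ae_iff.1 hae)
        intro y hy
        rw [Set.mem_setOf_eq] at hy
        rw [Set.mem_setOf_eq]
        intro hle2
        have h' : (f y : EReal) < (b : EReal) := by exact_mod_cast hy
        exact absurd hle2 (not_le.2 (h'.trans hmb))
      have hgnull : volume {y | g y < b} = 0 := by
        rw [← measure_congr (hsub_ae b)]
        exact hfnull
      obtain ⟨r, hr, hrpos⟩ :=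
        (((hDgg _ hε0).eventually (lt_mem_nhds (by norm_num : (2⁻¹ : ENNReal) < 1))).and
          self_mem_nhdsWithin).exists
      have hrpos' : (0:ℝ) < r := hrpos
      have hm1 : 2⁻¹ * volume (ball x r)
          < volume ({y | |g y - g x| < b - g x} ∩ ball x r) :=
        (ENNReal.lt_div_iff_mul_lt (Or.inl (hv0 r hrpos')) (Or.inl (hvt r))).1 hr
      have hz : volume ({y | |g y - g x| < b - g x} ∩ ball x r) = 0 :=
        measure_mono_null (fun y hy => hTsub hy.1) hgnull
      rw [hz] at hm1
      exact absurd hm1 (not_lt.2 zero_le)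
    -- Step E : g x ≤ m
    have hgxle : (g x : EReal) ≤ m := by
      by_contra h
      push_neg at h
      have hmax : max m ((f x : ℝ) : EReal) < (g x : EReal) :=
        max_lt h (by exact_mod_cast hfxlt)
      obtain ⟨β, hβ1, hβ2⟩ := exists_between hmax
      have hβt : β ≠ ⊤ := (hβ2.trans (EReal.coe_lt_top _)).ne
      have hβb : β ≠ ⊥ := ne_bot_of_gt (lt_of_le_of_lt (le_max_right _ _) hβ1)
      set b := β.toReal with hbdef
      have hb : (b : EReal) = β := EReal.coe_toReal hβt hβb
      have hfb : f x < b := by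
        have h' : ((f x : ℝ) : EReal) < (b : EReal) := by
          rw [hb]; exact lt_of_le_of_lt (le_max_right _ _) hβ1
        exact_mod_cast h'
      have hmb : m < (b : EReal) := by rw [hb]; exact lt_of_le_of_lt (le_max_left _ _) hβ1
      have hbg : b < g x := by
        have h' : (b : EReal) < ((g x : ℝ) : EReal) := by rw [hb]; exact hβ2
        exact_mod_cast h'
      have hxS : x ∈ {y | f y < b} := hfb
      have hSpos : 0 < volume {y | f y < b} := by
        by_contra hz
        push_neg at hz
        have hz0 : volume {y | f y < b} = 0 := le_antisymm hz zero_le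
        have hae2 : ∀ᵐ y ∂(volume : Measure (EuclideanSpace ℝ (Fin N))),
            (b : EReal) ≤ (f y : EReal) := by
          refine (measure_eq_zero_iff_ae_notMem.1 hz0).mono fun y hy => ?_
          rw [Set.mem_setOf_eq] at hy
          push_neg at hy
          exact_mod_cast hy
        have hle2 : (b : EReal) ≤ m := by
          rw [hm]
          exact le_essInf_of_ae_le _ hae2
        exact absurd (hle2.trans_lt hmb) (lt_irrefl _)
      obtain ⟨γ, hγ0, hγ1, hγbound⟩ := cone_lemma (hf b) hxS hSpos
      have hε0 : (0:ℝ) < g x - b := by linarith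
      have hth : ENNReal.ofReal (1 - γ/2) < 1 := ENNReal.ofReal_lt_one.2 (by linarith)
      have hevr1 : ∀ᶠ r : ℝ in nhdsWithin 0 (Set.Ioi 0), r < 1 :=
        Filter.Eventually.filter_mono nhdsWithin_le_nhds (gt_mem_nhds zero_lt_one)
      obtain ⟨r, ⟨hrT, hrpos⟩, hr1⟩ :=
        ((((hDgg _ hε0).eventually (lt_mem_nhds hth)).and self_mem_nhdsWithin).and hevr1).exists
      have hrpos' : (0:ℝ) < r := hrpos
      have h2 : ENNReal.ofReal (1 - γ/2) * volume (ball x r)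
          < volume ({y | |g y - g x| < g x - b} ∩ ball x r) :=
        (ENNReal.lt_div_iff_mul_lt (Or.inl (hv0 r hrpos')) (Or.inl (hvt r))).1 hrT
      have h1 : ENNReal.ofReal γ * volume (ball x r) ≤ volume ({y | g y < b} ∩ ball x r) := by
        rw [← show volume ({y | f y < b} ∩ ball x r) = volume ({y | g y < b} ∩ ball x r) from
          measure_congr ((hsub_ae b).inter (Filter.EventuallyEq.refl _ _))]
        exact hγbound r hrpos' hr1.le
      have hdisj : Disjoint ({y | |g y - g x| < g x - b} ∩ ball x r)
          ({y | g y < b} ∩ ball x r) := by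
        rw [Set.disjoint_left]
        rintro y ⟨hy1, _⟩ ⟨hy2, _⟩
        rw [Set.mem_setOf_eq, abs_lt] at hy1
        rw [Set.mem_setOf_eq] at hy2
        linarith [hy1.1]
      have hun : volume (({y | |g y - g x| < g x - b} ∩ ball x r) ∪ ({y | g y < b} ∩ ball x r))
          = volume ({y | |g y - g x| < g x - b} ∩ ball x r)
            + volume ({y | g y < b} ∩ ball x r) :=
        measure_union₀ (((hg b).nullMeasurableSet volume).inter
          measurableSet_ball.nullMeasurableSet) hdisj.aedisjoint
      have hle : volume (({y | |g y - g x| < g x - b} ∩ ball x r)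
          ∪ ({y | g y < b} ∩ ball x r)) ≤ volume (ball x r) :=
        measure_mono (Set.union_subset Set.inter_subset_right Set.inter_subset_right)
      have hcontra : volume (ball x r) < volume (ball x r) := by
        calc volume (ball x r) = 1 * volume (ball x r) := (one_mul _).symm
          _ < (ENNReal.ofReal (1 - γ/2) + ENNReal.ofReal γ) * volume (ball x r) := by
              refine ENNReal.mul_lt_mul_left (hv0 r hrpos') (hvt r) ?_
              rw [← ENNReal.ofReal_add (by linarith) hγ0.le]
              exact ENNReal.one_lt_ofReal.2 (by linarith)
          _ = ENNReal.ofReal (1 - γ/2) * volume (ball x r)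
              + ENNReal.ofReal γ * volume (ball x r) := add_mul _ _ _
          _ ≤ volume ({y | |g y - g x| < g x - b} ∩ ball x r)
              + volume ({y | g y < b} ∩ ball x r) := add_le_add h2.le h1
          _ = volume (({y | |g y - g x| < g x - b} ∩ ball x r)
              ∪ ({y | g y < b} ∩ ball x r)) := hun.symm
          _ ≤ volume (ball x r) := hle
      exact lt_irrefl _ hcontra
    have hgm : (g x : EReal) = m := le_antisymm hgxle hmle
    refine ⟨hgx, ?_, hgm, ?_⟩
    · rw [← hgm]; exact EReal.coe_ne_bot _
    · rw [← hgm]; exact_mod_cast hfxlt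
  · rintro ⟨hgx, hbot, hgm, hfm⟩
    refine ⟨hgx, fun hfa => ?_⟩
    have h1 : f x = g x := huniq _ _ (hACf.1 hfa) hgx
    rw [← hgm] at hfm
    have h2 : f x < g x := by exact_mod_cast hfm
    exact absurd h1 h2.ne
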